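/- (Segre type [(11)22]) Let n = 3 with coordinates (u¹,u²,u³), let λ be a nonzero real constant, define the symmetric metric g by g₁₁ = 1, g₁₂ = −2λu³, g₁₃ = λu², g₂₂ = 4, g₂₃ = λu¹, g₃₃ = 0, and let U = {u ∈ ℝ³ : det g(u) > 0} (here det g = −λ²(u¹)² − 4λ²(u²)² − 4λ³u¹u²u³). Define c_{ijk} := (1/3)(∂_j g_{ik} − ∂_k g_{ij}) and the skew-symmetric field w by w₁₂ = 0, w₂₃ = λ²u¹/√(det g), w₃₁ = λ²u²/√(det g) (with w_{ji} = −w_{ij}, w_{ii} = 0). Then (g, c, w) satisfies conditions (cond1) on U. -/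

import Mathlib

open scoped BigOperators

/-- Partial derivative `∂_k f` in the `k`-th coordinate direction. -/
noncomputable def pd {n : ℕ} (k : Fin n) (f : (Fin n → ℝ) → ℝ) (u : Fin n → ℝ) : ℝ :=
  fderiv ℝ f u (Pi.single k 1)

/-- Conditions (cond1) for a triple `(g, c, w)` on a set `U ⊆ ℝⁿ`:
`g` is the (lower-index) metric `g_{ij}`, `c` are the lowered coefficients `c_{ijk}`,
`w` is the skew-symmetric 2-form `w_{ij}`, and `c^s_{jk} := g^{si} c_{ijk}` is computed
via the pointwise inverse matrix `(g u)⁻¹`. -/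
def Cond1 {n : ℕ} (U : Set (Fin n → ℝ))
    (g : (Fin n → ℝ) → Matrix (Fin n) (Fin n) ℝ)
    (c : (Fin n → ℝ) → Fin n → Fin n → Fin n → ℝ)
    (w : (Fin n → ℝ) → Matrix (Fin n) (Fin n) ℝ) : Prop :=
  ∀ u ∈ U,
    (∀ i j k, pd k (fun x => g x i j) u + c u i j k + c u j i k = 0) ∧
    (∀ i j k, c u i j k + c u i k j = 0) ∧
    (∀ i j k, pd k (fun x => g x i j) u + pd i (fun x => g x j k) u
        + pd j (fun x => g x k i) u = 0) ∧
    (∀ i j, w u i j + w u j i = 0) ∧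
    (∀ i j l, pd l (fun x => w x i j) u
        = ∑ s, (∑ a, (g u)⁻¹ s a * c u a i j) * w u s l) ∧
    (∀ m l p k, pd k (fun x => c x p m l) u
        + ∑ s, (∑ a, (g u)⁻¹ s a * c u a m l) * c u s p k + w u m l * w u p k = 0)

lemma pd_const' {n : ℕ} (k : Fin n) (a : ℝ) (u : Fin n → ℝ) : pd k (fun _ => a) u = 0 := by
  simp [pd]

lemma pd_neg' {n : ℕ} (k : Fin n) (f : (Fin n → ℝ) → ℝ) (u : Fin n → ℝ) :
    pd k (fun x => -(f x)) u = -pd k f u := by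
  simp [pd, fderiv_neg]

lemma pd_eq' {n : ℕ} {f : (Fin n → ℝ) → ℝ} {L : (Fin n → ℝ) →L[ℝ] ℝ} {u : Fin n → ℝ}
    (h : HasFDerivAt f L u) (k : Fin n) : pd k f u = L (Pi.single k 1) := by
  rw [pd, h.fderiv]

lemma hasFD_coord' {n : ℕ} (i : Fin n) (u : Fin n → ℝ) :
    HasFDerivAt (fun x : Fin n → ℝ => x i)
      (ContinuousLinearMap.proj i : (Fin n → ℝ) →L[ℝ] ℝ) u :=
  (ContinuousLinearMap.proj i : (Fin n → ℝ) →L[ℝ] ℝ).hasFDerivAt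

lemma pd_cmul' {n : ℕ} (a : ℝ) (i k : Fin n) (u : Fin n → ℝ) :
    pd k (fun x => a * x i) u = if i = k then a else 0 := by
  rw [pd_eq' ((hasFD_coord' i u).const_mul a) k]
  simp [Pi.single_apply]

lemma pd_div_sqrt' (l a : ℝ) (i k : Fin 3) (u : Fin 3 → ℝ)
    (hd : 0 < -(l ^ 2 * u 0 ^ 2) - 4 * l ^ 2 * u 1 ^ 2 - 4 * l ^ 3 * u 0 * u 1 * u 2) :
    pd k (fun x => a * x i /
        Real.sqrt (-(l ^ 2 * x 0 ^ 2) - 4 * l ^ 2 * x 1 ^ 2 - 4 * l ^ 3 * x 0 * x 1 * x 2)) u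
      = (2 * a * (Pi.single k 1 : Fin 3 → ℝ) i *
            (-(l ^ 2 * u 0 ^ 2) - 4 * l ^ 2 * u 1 ^ 2 - 4 * l ^ 3 * u 0 * u 1 * u 2)
          - a * u i *
            ((-(2 * l ^ 2 * u 0) - 4 * l ^ 3 * u 1 * u 2) * (Pi.single k 1 : Fin 3 → ℝ) 0
              + (-(8 * l ^ 2 * u 1) - 4 * l ^ 3 * u 0 * u 2) * (Pi.single k 1 : Fin 3 → ℝ) 1
              + (-(4 * l ^ 3 * u 0 * u 1)) * (Pi.single k 1 : Fin 3 → ℝ) 2)) /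
        (2 * (-(l ^ 2 * u 0 ^ 2) - 4 * l ^ 2 * u 1 ^ 2 - 4 * l ^ 3 * u 0 * u 1 * u 2) *
          Real.sqrt (-(l ^ 2 * u 0 ^ 2) - 4 * l ^ 2 * u 1 ^ 2 - 4 * l ^ 3 * u 0 * u 1 * u 2)) := by
  simp only [pow_two, div_eq_mul_inv]
  have hd' : 0 < -(l * l * (u 0 * u 0)) - 4 * (l * l) * (u 1 * u 1)
      - 4 * l ^ 3 * u 0 * u 1 * u 2 := by
    have heq : -(l ^ 2 * u 0 ^ 2) - 4 * l ^ 2 * u 1 ^ 2 - 4 * l ^ 3 * u 0 * u 1 * u 2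
        = -(l * l * (u 0 * u 0)) - 4 * (l * l) * (u 1 * u 1)
          - 4 * l ^ 3 * u 0 * u 1 * u 2 := by ring
    exact heq ▸ hd
  have h0 := hasFD_coord' 0 u
  have h1 := hasFD_coord' 1 u
  have h2 := hasFD_coord' 2 u
  have hE := ((((h0.mul h0).const_mul (l * l)).neg.sub
      ((h1.mul h1).const_mul (4 * (l * l)))).sub
    (((h0.const_mul (4 * l ^ 3)).mul h1).mul h2))
  have hs : Real.sqrt (-(l * l * (u 0 * u 0)) - 4 * (l * l) * (u 1 * u 1)
      - 4 * l ^ 3 * u 0 * u 1 * u 2) ≠ 0 := (Real.sqrt_pos.2 hd').ne'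
  have hinv := ((Real.hasDerivAt_sqrt hd'.ne').inv hs).comp_hasFDerivAt u hE
  simp only [Function.comp_def] at hinv
  have hq := ((hasFD_coord' i u).const_mul a).mul hinv
  simp only [Pi.mul_def, Pi.inv_def, Pi.sub_def, Pi.neg_def] at hq
  rw [pd_eq' hq k]
  simp only [ContinuousLinearMap.smul_apply, ContinuousLinearMap.sub_apply,
    ContinuousLinearMap.add_apply, ContinuousLinearMap.neg_apply,
    ContinuousLinearMap.proj_apply, smul_eq_mul]
  have hs2 : Real.sqrt (-(l * l * (u 0 * u 0)) - 4 * (l * l) * (u 1 * u 1)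
        - 4 * l ^ 3 * u 0 * u 1 * u 2)
      * Real.sqrt (-(l * l * (u 0 * u 0)) - 4 * (l * l) * (u 1 * u 1)
        - 4 * l ^ 3 * u 0 * u 1 * u 2)
      = -(l * l * (u 0 * u 0)) - 4 * (l * l) * (u 1 * u 1)
        - 4 * l ^ 3 * u 0 * u 1 * u 2 := Real.mul_self_sqrt hd'.le
  set s := Real.sqrt (-(l * l * (u 0 * u 0)) - 4 * (l * l) * (u 1 * u 1)
    - 4 * l ^ 3 * u 0 * u 1 * u 2) with hsdef
  rw [← hs2]
  field_simp
  ring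


set_option maxHeartbeats 2000000 in
/-- Segre type [(11)22]. With `(u¹,u²,u³) = (u 0, u 1, u 2)`, `λ ≠ 0`,
metric `g = !![1, −2λu³, λu²; −2λu³, 4, λu¹; λu², λu¹, 0]`,
`U = {u : det g(u) > 0}` (where `det g = −λ²(u¹)² − 4λ²(u²)² − 4λ³u¹u²u³`),
`c_{ijk} = (1/3)(∂_j g_{ik} − ∂_k g_{ij})` and the skew form with `w₁₂ = 0`,
`w₂₃ = λ²u¹/√(det g)`, `w₃₁ = λ²u²/√(det g)`, conditions (cond1) hold on `U`. -/
theorem segre_1122_first_satisfies_cond1 (l : ℝ) (hl : l ≠ 0)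
    (g : (Fin 3 → ℝ) → Matrix (Fin 3) (Fin 3) ℝ)
    (hg : g = fun u => !![1, -(2 * l * u 2), l * u 1;
                          -(2 * l * u 2), 4, l * u 0;
                          l * u 1, l * u 0, 0])
    (U : Set (Fin 3 → ℝ)) (hU : U = {u | 0 < (g u).det})
    (c : (Fin 3 → ℝ) → Fin 3 → Fin 3 → Fin 3 → ℝ)
    (hc : c = fun u i j k =>
      (1 / 3) * (pd j (fun x => g x i k) u - pd k (fun x => g x i j) u))
    (w : (Fin 3 → ℝ) → Matrix (Fin 3) (Fin 3) ℝ)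
    (hw : w = fun u =>
      !![0, 0, -(l ^ 2 * u 1 / Real.sqrt (g u).det);
         0, 0, l ^ 2 * u 0 / Real.sqrt (g u).det;
         l ^ 2 * u 1 / Real.sqrt (g u).det, -(l ^ 2 * u 0 / Real.sqrt (g u).det), 0]) :
    (∀ u : Fin 3 → ℝ, (g u).det
        = -(l ^ 2 * (u 0) ^ 2) - 4 * l ^ 2 * (u 1) ^ 2 - 4 * l ^ 3 * u 0 * u 1 * u 2) ∧
    Cond1 U g c w := by
  subst hg hU
  have hdetE : ∀ x : Fin 3 → ℝ, (!![1, -(2 * l * x 2), l * x 1;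
        -(2 * l * x 2), 4, l * x 0; l * x 1, l * x 0, 0] : Matrix (Fin 3) (Fin 3) ℝ).det
      = -(l ^ 2 * x 0 ^ 2) - 4 * l ^ 2 * x 1 ^ 2 - 4 * l ^ 3 * x 0 * x 1 * x 2 := by
    intro x; simp [Matrix.det_fin_three]; ring
  have hpdg : ∀ (x : Fin 3 → ℝ) (i j k : Fin 3),
      pd k (fun y => (!![1, -(2 * l * y 2), l * y 1;
        -(2 * l * y 2), 4, l * y 0; l * y 1, l * y 0, 0] : Matrix (Fin 3) (Fin 3) ℝ) i j) x
      = ![![![0,0,0], ![0,0,-(2*l)], ![0,l,0]],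
          ![![0,0,-(2*l)], ![0,0,0], ![l,0,0]],
          ![![0,l,0], ![l,0,0], ![0,0,0]]] i j k := by
    intro x i j k
    fin_cases i <;> fin_cases j <;> fin_cases k <;>
      (simp [pd_neg', pd_cmul', pd_const', Matrix.vecHead, Matrix.vecTail]; try ring)
  have hcv : ∀ (x : Fin 3 → ℝ) (a i j : Fin 3), c x a i j
      = ![![![0,0,0], ![0,0,l], ![0,-l,0]],
          ![![0,0,l], ![0,0,0], ![-l,0,0]],
          ![![0,0,0], ![0,0,0], ![0,0,0]]] a i j := by
    intro x a i j
    rw [hc]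
    simp only [hpdg]
    fin_cases a <;> fin_cases i <;> fin_cases j <;>
      (norm_num [Matrix.vecHead, Matrix.vecTail]; try ring)
  refine ⟨hdetE, ?_⟩
  intro u hu
  have hd : 0 < -(l ^ 2 * u 0 ^ 2) - 4 * l ^ 2 * u 1 ^ 2 - 4 * l ^ 3 * u 0 * u 1 * u 2 := by
    have h1 := hu
    simp only [Set.mem_setOf_eq] at h1
    rwa [hdetE u] at h1
  have hs : Real.sqrt (-(l ^ 2 * u 0 ^ 2) - 4 * l ^ 2 * u 1 ^ 2
      - 4 * l ^ 3 * u 0 * u 1 * u 2) ≠ 0 := (Real.sqrt_pos.2 hd).ne'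
  have key := fun i k => pd_div_sqrt' l (l ^ 2) i k u hd
  have hwu : w u = !![0, 0, -(l ^ 2 * u 1 / Real.sqrt (-(l ^ 2 * u 0 ^ 2)
        - 4 * l ^ 2 * u 1 ^ 2 - 4 * l ^ 3 * u 0 * u 1 * u 2));
      0, 0, l ^ 2 * u 0 / Real.sqrt (-(l ^ 2 * u 0 ^ 2)
        - 4 * l ^ 2 * u 1 ^ 2 - 4 * l ^ 3 * u 0 * u 1 * u 2);
      l ^ 2 * u 1 / Real.sqrt (-(l ^ 2 * u 0 ^ 2)
        - 4 * l ^ 2 * u 1 ^ 2 - 4 * l ^ 3 * u 0 * u 1 * u 2),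
      -(l ^ 2 * u 0 / Real.sqrt (-(l ^ 2 * u 0 ^ 2)
        - 4 * l ^ 2 * u 1 ^ 2 - 4 * l ^ 3 * u 0 * u 1 * u 2)), 0] := by
    rw [hw]; simp only [hdetE]
  have hwfun : ∀ i j : Fin 3, (fun x => w x i j)
      = (fun x => (!![0, 0, -(l ^ 2 * x 1 / Real.sqrt (-(l ^ 2 * x 0 ^ 2)
          - 4 * l ^ 2 * x 1 ^ 2 - 4 * l ^ 3 * x 0 * x 1 * x 2));
        0, 0, l ^ 2 * x 0 / Real.sqrt (-(l ^ 2 * x 0 ^ 2)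
          - 4 * l ^ 2 * x 1 ^ 2 - 4 * l ^ 3 * x 0 * x 1 * x 2);
        l ^ 2 * x 1 / Real.sqrt (-(l ^ 2 * x 0 ^ 2)
          - 4 * l ^ 2 * x 1 ^ 2 - 4 * l ^ 3 * x 0 * x 1 * x 2),
        -(l ^ 2 * x 0 / Real.sqrt (-(l ^ 2 * x 0 ^ 2)
          - 4 * l ^ 2 * x 1 ^ 2 - 4 * l ^ 3 * x 0 * x 1 * x 2)), 0]
          : Matrix (Fin 3) (Fin 3) ℝ) i j) := by
    intro i j; funext x; rw [hw]; simp only [hdetE]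
  have hgi : (!![1, -(2 * l * u 2), l * u 1;
        -(2 * l * u 2), 4, l * u 0; l * u 1, l * u 0, 0] : Matrix (Fin 3) (Fin 3) ℝ)⁻¹
      = (-(l ^ 2 * u 0 ^ 2) - 4 * l ^ 2 * u 1 ^ 2 - 4 * l ^ 3 * u 0 * u 1 * u 2)⁻¹ •
        !![-(l ^ 2 * u 0 ^ 2), l ^ 2 * u 0 * u 1, -(2 * l ^ 2 * u 0 * u 2) - 4 * l * u 1;
           l ^ 2 * u 0 * u 1, -(l ^ 2 * u 1 ^ 2), -(2 * l ^ 2 * u 1 * u 2) - l * u 0;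
           -(2 * l ^ 2 * u 0 * u 2) - 4 * l * u 1, -(2 * l ^ 2 * u 1 * u 2) - l * u 0,
             4 - 4 * l ^ 2 * u 2 ^ 2] := by
    rw [Matrix.inv_def, Matrix.adjugate_fin_three_of, Ring.inverse_eq_inv', hdetE u]
    congr 1
    ext i j
    fin_cases i <;> fin_cases j <;> (simp; try ring)
  have hcfun : ∀ p m l' : Fin 3, (fun x => c x p m l')
      = (fun _ : Fin 3 → ℝ => ![![![0,0,0], ![0,0,l], ![0,-l,0]],
          ![![0,0,l], ![0,0,0], ![-l,0,0]],
          ![![0,0,0], ![0,0,0], ![0,0,0]]] p m l') := by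
    intro p m l'; funext x; exact hcv x p m l'
  refine ⟨?_, ?_, ?_, ?_, ?_, ?_⟩
  · -- (1)
    intro i j k
    simp only [hpdg, hcv]
    fin_cases i <;> fin_cases j <;> fin_cases k <;>
      (norm_num [Matrix.vecHead, Matrix.vecTail]; try ring)
  · -- (2)
    intro i j k
    rw [hc]
    ring
  · -- (3)
    intro i j k
    simp only [hpdg]
    fin_cases i <;> fin_cases j <;> fin_cases k <;>
      (norm_num [Matrix.vecHead, Matrix.vecTail]; try ring)
  · -- (4)
    intro i j
    rw [hwu]
    fin_cases i <;> fin_cases j <;> norm_num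
  · -- (5)
    intro i j k
    simp only [hwfun, hwu, hgi, hcv, Fin.sum_univ_three, Matrix.smul_apply, smul_eq_mul]
    fin_cases i <;> fin_cases j <;> fin_cases k <;>
      (simp only [Fin.zero_eta, Fin.mk_one, Fin.reduceFinMk, Fin.isValue, Matrix.of_apply, Matrix.cons_val', Matrix.cons_val_zero,
        Matrix.cons_val_one, Matrix.head_cons, Matrix.empty_val', Matrix.cons_val_fin_one,
        Matrix.cons_val_two, Nat.succ_eq_add_one, Nat.reduceAdd, Matrix.tail_cons,
        Matrix.head_fin_const, pd_neg', key, pd_const', Pi.single_apply,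
        Fin.reduceEq, reduceIte, mul_zero, zero_mul, add_zero, zero_add, neg_zero,
        neg_neg] <;>
        (try field_simp) <;> (try ring))
  · -- (6)
    intro m l' p k
    simp only [hcfun, pd_const', hwu, hgi, hcv, Fin.sum_univ_three,
      Matrix.smul_apply, smul_eq_mul]
    fin_cases m <;> fin_cases l' <;> fin_cases p <;> fin_cases k <;>
      (simp only [Fin.zero_eta, Fin.mk_one, Fin.reduceFinMk, Fin.isValue, Matrix.of_apply, Matrix.cons_val', Matrix.cons_val_zero,
        Matrix.cons_val_one, Matrix.head_cons, Matrix.empty_val', Matrix.cons_val_fin_one,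
        Matrix.cons_val_two, Nat.succ_eq_add_one, Nat.reduceAdd, Matrix.tail_cons,
        Matrix.head_fin_const, div_mul_div_comm, Real.mul_self_sqrt hd.le,
        mul_neg, neg_mul, neg_neg, mul_zero, zero_mul, sub_zero, zero_sub,
        add_zero, zero_add, neg_zero] <;>
        (try field_simp) <;> (try ring))
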